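/- Let X, Y ⊆ ℝ^d be convex compact subsets of the unit ball with X − Y ⊆ B(0,1), and let c(x,y) = h(x−y) where h : ℝ^d → [0,1] is convex, even, and has ‖h‖_{C²} ≤ Λ on a convex open set containing X − Y. Let (φ, ψ) be a pair of optimal Kantorovich potentials for T_c(μ,ν) with 0 ≤ φ ≤ 1 and −1 ≤ ψ ≤ 0. Then the maps x ↦ φ(x) − (Λ/2)‖x‖² on X and y ↦ ψ(y) − (Λ/2)‖y‖² on Y are concave and 2Λ-Lipschitz, and bounded in absolute value by 2Λ. -/

import Mathlib

open InnerProductSpace Set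

local notation "⟪" x ", " y "⟫" => @inner ℝ _ _ x y

lemma sInf_image_sub_const {α : Type*} {T : Set α} (f : α → ℝ) (c : ℝ)
    (hne : T.Nonempty) (m : ℝ) (hm : ∀ t ∈ T, m ≤ f t) :
    sInf ((fun t => f t - c) '' T) = sInf (f '' T) - c := by
  have hbdd : BddBelow (f '' T) := ⟨m, by rintro _ ⟨t, ht, rfl⟩; exact hm t ht⟩
  have hbdd' : BddBelow ((fun t => f t - c) '' T) :=
    ⟨m - c, by rintro _ ⟨t, ht, rfl⟩; exact sub_le_sub_right (hm t ht) c⟩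
  apply le_antisymm
  · rw [le_sub_iff_add_le]
    apply le_csInf (hne.image f)
    rintro _ ⟨t, ht, rfl⟩
    have := csInf_le hbdd' ⟨t, ht, rfl⟩
    simp only at this; linarith
  · apply le_csInf (hne.image _)
    rintro _ ⟨t, ht, rfl⟩
    have := csInf_le hbdd ⟨t, ht, rfl⟩
    simp only
    linarith

variable {E : Type*} [NormedAddCommGroup E] [InnerProductSpace ℝ E] [CompleteSpace E]

lemma concaveOn_of_inner_grad_le {s : Set E} (hs : Convex ℝ s) {F : E → ℝ} {G : E → E}
    (hF : ∀ x ∈ s, HasFDerivAt F (toDual ℝ E (G x)) x)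
    (hmono : ∀ u ∈ s, ∀ v ∈ s, ⟪G u - G v, u - v⟫ ≤ 0) :
    ConcaveOn ℝ s F := by
  refine ⟨hs, fun a ha b hb ta tb hta htb hab => ?_⟩
  set γ : ℝ → E := fun t => a + t • (b - a) with hγdef
  have hγmem : ∀ t ∈ Icc (0:ℝ) 1, γ t ∈ s := fun t ht => hs.add_smul_sub_mem ha hb ht
  have hq : ∀ t ∈ Icc (0:ℝ) 1, HasDerivAt (F ∘ γ) ⟪G (γ t), b - a⟫ t := by
    intro t ht
    have hγd : HasDerivAt γ (b - a) t := by
      have h0 := ((hasDerivAt_id t).smul_const (b - a)).const_add a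
      rw [one_smul] at h0
      exact h0
    have := (hF (γ t) (hγmem t ht)).comp_hasDerivAt t hγd
    simpa [toDual_apply_apply] using this
  have hconc : ConcaveOn ℝ (Icc (0:ℝ) 1) (F ∘ γ) := by
    apply AntitoneOn.concaveOn_of_deriv (convex_Icc 0 1)
    · exact fun t ht => ((hq t ht).continuousAt).continuousWithinAt
    · intro t ht
      rw [interior_Icc] at ht
      exact ((hq t (Ioo_subset_Icc_self ht)).differentiableAt).differentiableWithinAt
    · intro t ht u hu htu
      rw [interior_Icc] at ht hu
      rw [(hq t (Ioo_subset_Icc_self ht)).deriv, (hq u (Ioo_subset_Icc_self hu)).deriv]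
      rcases eq_or_lt_of_le htu with rfl | hlt
      · exact le_refl _
      · have key := hmono (γ u) (hγmem u (Ioo_subset_Icc_self hu)) (γ t)
          (hγmem t (Ioo_subset_Icc_self ht))
        have hdiff : γ u - γ t = (u - t) • (b - a) := by
          simp only [hγdef]
          module
        rw [hdiff, real_inner_smul_right, inner_sub_left] at key
        nlinarith [key]
  have h01 : (0:ℝ) ∈ Icc (0:ℝ) 1 := ⟨le_refl _, zero_le_one⟩
  have h11 : (1:ℝ) ∈ Icc (0:ℝ) 1 := ⟨zero_le_one, le_refl _⟩
  have hcomb := hconc.2 h01 h11 hta htb hab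
  have e0 : γ 0 = a := by simp [hγdef]
  have e1 : γ 1 = b := by simp [hγdef]
  have e2 : γ tb = ta • a + tb • b := by
    have hta' : ta = 1 - tb := by linarith
    simp only [hγdef, hta']
    module
  simpa [Function.comp, e0, e1, e2] using hcomb

lemma assembly {s T : Set E} (hs : Convex ℝ s) (hT : T.Nonempty)
    {A : E → E → ℝ} {L : ℝ}
    (hconc : ∀ t ∈ T, ConcaveOn ℝ s (A t))
    (hlip : ∀ t ∈ T, ∀ x ∈ s, ∀ x' ∈ s, A t x - A t x' ≤ L * ‖x - x'‖)
    {m : ℝ} (hmlb : ∀ x ∈ s, ∀ t ∈ T, m ≤ A t x)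
    {Φ : E → ℝ} (hΦ : ∀ x ∈ s, Φ x = sInf ((fun t => A t x) '' T)) :
    ConcaveOn ℝ s Φ ∧ ∀ x ∈ s, ∀ x' ∈ s, Φ x - Φ x' ≤ L * ‖x - x'‖ := by
  have hbdd : ∀ x ∈ s, BddBelow ((fun t => A t x) '' T) := fun x hx =>
    ⟨m, by rintro _ ⟨t, ht, rfl⟩; exact hmlb x hx t ht⟩
  have hle : ∀ x ∈ s, ∀ t ∈ T, Φ x ≤ A t x := fun x hx t ht => by
    rw [hΦ x hx]; exact csInf_le (hbdd x hx) ⟨t, ht, rfl⟩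
  constructor
  · refine ⟨hs, fun a ha b hb ta tb hta htb hab => ?_⟩
    have hc : ta • a + tb • b ∈ s := hs ha hb hta htb hab
    rw [hΦ _ hc]
    apply le_csInf (hT.image _)
    rintro _ ⟨t, ht, rfl⟩
    have h1 := hle a ha t ht
    have h2 := hle b hb t ht
    have h3 := (hconc t ht).2 ha hb hta htb hab
    simp only [smul_eq_mul] at *
    nlinarith [mul_le_mul_of_nonneg_left h1 hta, mul_le_mul_of_nonneg_left h2 htb]
  · intro x hx x' hx'
    have key : Φ x - L * ‖x - x'‖ ≤ Φ x' := by
      rw [hΦ x' hx']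
      apply le_csInf (hT.image _)
      rintro _ ⟨t, ht, rfl⟩
      have h1 := hle x hx t ht
      have h2 := hlip t ht x hx x' hx'
      simp only
      linarith
    linarith

lemma side {s T : Set E} {Λ : ℝ} (hΛ1 : 1 ≤ Λ)
    (hs : Convex ℝ s) (hsball : s ⊆ Metric.closedBall 0 1) (hT : T.Nonempty)
    {c : E → E → ℝ} {G : E → E → E}
    (hgradc : ∀ t ∈ T, ∀ x ∈ s, HasFDerivAt (c t) (toDual ℝ E (G t x)) x)
    (hGbd : ∀ t ∈ T, ∀ x ∈ s, ‖G t x‖ ≤ Λ)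
    (hGlip : ∀ t ∈ T, ∀ u ∈ s, ∀ v ∈ s, ‖G t u - G t v‖ ≤ Λ * ‖u - v‖)
    (hcpos : ∀ t ∈ T, ∀ x ∈ s, 0 ≤ c t x)
    {p : E → ℝ} (hpbd : ∀ t ∈ T, |p t| ≤ 1)
    {Φ : E → ℝ} (hΦbd : ∀ x ∈ s, |Φ x| ≤ 1)
    (hconj : ∀ x ∈ s, Φ x = sInf ((fun t => c t x - p t) '' T)) :
    ConcaveOn ℝ s (fun x => Φ x - Λ / 2 * ‖x‖ ^ 2) ∧
      LipschitzOnWith (Real.toNNReal (2 * Λ)) (fun x => Φ x - Λ / 2 * ‖x‖ ^ 2) s ∧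
      ∀ x ∈ s, |Φ x - Λ / 2 * ‖x‖ ^ 2| ≤ 2 * Λ := by
  have hΛ0 : (0:ℝ) < Λ := by linarith
  have hxnorm : ∀ x ∈ s, ‖x‖ ≤ 1 := fun x hx => mem_closedBall_zero_iff.1 (hsball hx)
  set A : E → E → ℝ := fun t x => c t x - p t - Λ / 2 * ‖x‖ ^ 2 with hA
  have hAd : ∀ t ∈ T, ∀ x ∈ s, HasFDerivAt (A t) (toDual ℝ E (G t x - Λ • x)) x := by
    intro t ht x hx
    have d2 : HasFDerivAt (fun x : E => Λ / 2 * ‖x‖ ^ 2) ((Λ / 2) • (2 • (innerSL ℝ x))) x :=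
      (hasStrictFDerivAt_norm_sq x).hasFDerivAt.const_mul (Λ / 2)
    have hsum := ((hgradc t ht x hx).sub_const (p t)).sub d2
    have e : toDual ℝ E (G t x) - (Λ / 2) • (2 • (innerSL ℝ x)) = toDual ℝ E (G t x - Λ • x) := by
      ext v
      simp only [toDual_apply_apply, ContinuousLinearMap.coe_sub', Function.comp_apply, Pi.sub_apply,
        ContinuousLinearMap.coe_smul', Pi.smul_apply, innerSL_apply_apply, smul_eq_mul,
        inner_sub_left, real_inner_smul_left]
      ring
    exact hsum.congr_fderiv e
  have hconcA : ∀ t ∈ T, ConcaveOn ℝ s (A t) := by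
    intro t ht
    apply concaveOn_of_inner_grad_le hs (G := fun x => G t x - Λ • x) (fun x hx => hAd t ht x hx)
    intro u hu v hv
    have e : (G t u - Λ • u) - (G t v - Λ • v) = (G t u - G t v) - Λ • (u - v) := by module
    rw [e, inner_sub_left, real_inner_smul_left, real_inner_self_eq_norm_sq, pow_two]
    have h1 := real_inner_le_norm (G t u - G t v) (u - v)
    have h3 : ‖G t u - G t v‖ * ‖u - v‖ ≤ Λ * ‖u - v‖ * ‖u - v‖ :=
      mul_le_mul_of_nonneg_right (hGlip t ht u hu v hv) (norm_nonneg _)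
    linarith
  have hlipA : ∀ t ∈ T, ∀ x ∈ s, ∀ x' ∈ s, A t x - A t x' ≤ 2 * Λ * ‖x - x'‖ := by
    intro t ht x hx x' hx'
    have hb : ∀ z ∈ s, ‖toDual ℝ E (G t z - Λ • z)‖ ≤ 2 * Λ := by
      intro z hz
      rw [LinearIsometryEquiv.norm_map]
      have := norm_sub_le (G t z) (Λ • z)
      have h2 : ‖Λ • z‖ ≤ Λ := by
        rw [norm_smul, Real.norm_eq_abs, abs_of_pos hΛ0]
        nlinarith [hxnorm z hz]
      have h3 := hGbd t ht z hz
      linarith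
    have key := hs.norm_image_sub_le_of_norm_hasFDerivWithin_le
      (fun z hz => (hAd t ht z hz).hasFDerivWithinAt) hb hx' hx
    calc A t x - A t x' ≤ |A t x - A t x'| := le_abs_self _
    _ = ‖A t x - A t x'‖ := rfl
    _ ≤ 2 * Λ * ‖x - x'‖ := key
  have hmlb : ∀ x ∈ s, ∀ t ∈ T, -(2 * Λ) ≤ A t x := by
    intro x hx t ht
    have h1 := hcpos t ht x hx
    have h2 := (abs_le.1 (hpbd t ht)).2
    have h3 : ‖x‖ ^ 2 ≤ 1 := by nlinarith [norm_nonneg x, hxnorm x hx]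
    have h4 : (0:ℝ) ≤ ‖x‖ ^ 2 := sq_nonneg _
    simp only [hA]
    nlinarith
  have hΦ' : ∀ x ∈ s, (fun x => Φ x - Λ / 2 * ‖x‖ ^ 2) x = sInf ((fun t => A t x) '' T) := by
    intro x hx
    simp only
    rw [hconj x hx]
    refine (sInf_image_sub_const (fun t => c t x - p t) (Λ / 2 * ‖x‖ ^ 2) hT (-1) ?_).symm
    intro t ht
    have h5 := hcpos t ht x hx
    have h6 := (abs_le.1 (hpbd t ht)).2
    show -1 ≤ c t x - p t
    linarith
  obtain ⟨hcv, hlip2⟩ := assembly hs hT hconcA hlipA hmlb hΦ'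
  refine ⟨hcv, ?_, ?_⟩
  · rw [lipschitzOnWith_iff_dist_le_mul]
    intro x hx x' hx'
    rw [Real.dist_eq, dist_eq_norm, Real.coe_toNNReal _ (by linarith)]
    have h1 := hlip2 x hx x' hx'
    have h2 := hlip2 x' hx' x hx
    rw [norm_sub_rev x' x] at h2
    rw [abs_sub_le_iff]
    exact ⟨h1, h2⟩
  · intro x hx
    have h1 := abs_le.1 (hΦbd x hx)
    have h3 : ‖x‖ ^ 2 ≤ 1 := by nlinarith [norm_nonneg x, hxnorm x hx]
    have h4 : (0:ℝ) ≤ ‖x‖ ^ 2 := sq_nonneg _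
    rw [abs_le]
    constructor <;> nlinarith [h1.1, h1.2]

open MeasureTheory

def IsCoupling {d : ℕ}
    (π : Measure (EuclideanSpace ℝ (Fin d) × EuclideanSpace ℝ (Fin d)))
    (μ ν : Measure (EuclideanSpace ℝ (Fin d))) : Prop :=
  π.map Prod.fst = μ ∧ π.map Prod.snd = ν

noncomputable def transportCost {d : ℕ}
    (c : EuclideanSpace ℝ (Fin d) → EuclideanSpace ℝ (Fin d) → ℝ)
    (μ ν : Measure (EuclideanSpace ℝ (Fin d))) : ℝ :=
  sInf {t | ∃ π : Measure (EuclideanSpace ℝ (Fin d) × EuclideanSpace ℝ (Fin d)),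
    IsCoupling π μ ν ∧ t = ∫ p, c p.1 p.2 ∂π}

/-- Semiconcavity of optimal Kantorovich potentials: for a `C²` cost `h` with norm `≤ Λ`
on a neighbourhood of `X - Y`, the maps `x ↦ φ(x) - (Λ/2)‖x‖²` and `y ↦ ψ(y) - (Λ/2)‖y‖²`
are concave, `2Λ`-Lipschitz and bounded by `2Λ` on `X` and `Y` respectively. -/
theorem stmt_3 {d : ℕ} (X Y : Set (EuclideanSpace ℝ (Fin d)))
    (hXconv : Convex ℝ X) (hXcomp : IsCompact X) (hXne : X.Nonempty)
    (hYconv : Convex ℝ Y) (hYcomp : IsCompact Y) (hYne : Y.Nonempty)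
    (hXball : X ⊆ Metric.closedBall 0 1) (hYball : Y ⊆ Metric.closedBall 0 1)
    (hZball : ∀ x ∈ X, ∀ y ∈ Y, x - y ∈ Metric.closedBall (0 : EuclideanSpace ℝ (Fin d)) 1)
    (h : EuclideanSpace ℝ (Fin d) → ℝ) (g : EuclideanSpace ℝ (Fin d) → EuclideanSpace ℝ (Fin d))
    (hconv : ConvexOn ℝ Set.univ h) (heven : ∀ z, h (-z) = h z)
    (hrange : ∀ z, 0 ≤ h z ∧ h z ≤ 1)
    (Λ : ℝ) (hΛ1 : 1 ≤ Λ)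
    (Z₁ : Set (EuclideanSpace ℝ (Fin d))) (hZ₁open : IsOpen Z₁) (hZ₁conv : Convex ℝ Z₁)
    (hZ₁ : ∀ x ∈ X, ∀ y ∈ Y, x - y ∈ Z₁)
    (hgrad : ∀ z ∈ Z₁, HasGradientAt h (g z) z)
    (hgbd : ∀ z ∈ Z₁, ‖g z‖ ≤ Λ)
    (hgLip : ∀ z ∈ Z₁, ∀ z' ∈ Z₁, ‖g z - g z'‖ ≤ Λ * ‖z - z'‖)
    (μ ν : Measure (EuclideanSpace ℝ (Fin d)))
    [IsProbabilityMeasure μ] [IsProbabilityMeasure ν] (hμX : μ X = 1) (hνY : ν Y = 1)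
    (φ ψ : EuclideanSpace ℝ (Fin d) → ℝ)
    (hφbd : ∀ x ∈ X, 0 ≤ φ x ∧ φ x ≤ 1) (hψbd : ∀ y ∈ Y, -1 ≤ ψ y ∧ ψ y ≤ 0)
    (hfeas : ∀ x ∈ X, ∀ y ∈ Y, φ x + ψ y ≤ h (x - y))
    (hφconj : ∀ x ∈ X, φ x = sInf ((fun y => h (x - y) - ψ y) '' Y))
    (hψconj : ∀ y ∈ Y, ψ y = sInf ((fun x => h (x - y) - φ x) '' X))
    (hopt : (∫ x, φ x ∂μ) + (∫ y, ψ y ∂ν) = transportCost (fun x y => h (x - y)) μ ν) :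
    (ConcaveOn ℝ X (fun x => φ x - Λ / 2 * ‖x‖ ^ 2) ∧
      LipschitzOnWith (Real.toNNReal (2 * Λ)) (fun x => φ x - Λ / 2 * ‖x‖ ^ 2) X ∧
      ∀ x ∈ X, |φ x - Λ / 2 * ‖x‖ ^ 2| ≤ 2 * Λ) ∧
    (ConcaveOn ℝ Y (fun y => ψ y - Λ / 2 * ‖y‖ ^ 2) ∧
      LipschitzOnWith (Real.toNNReal (2 * Λ)) (fun y => ψ y - Λ / 2 * ‖y‖ ^ 2) Y ∧
      ∀ y ∈ Y, |ψ y - Λ / 2 * ‖y‖ ^ 2| ≤ 2 * Λ) := by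
  constructor
  · apply side hΛ1 hXconv hXball hYne (c := fun y x => h (x - y)) (G := fun y x => g (x - y))
      (p := ψ) (Φ := φ)
    · intro y hy x hx
      have hz := hZ₁ x hx y hy
      have h1 := (hgrad _ hz).hasFDerivAt.comp x (hasFDerivAt_sub_const y)
      exact h1
    · intro y hy x hx
      exact hgbd _ (hZ₁ x hx y hy)
    · intro y hy u hu v hv
      have := hgLip _ (hZ₁ u hu y hy) _ (hZ₁ v hv y hy)
      rwa [sub_sub_sub_cancel_right] at this
    · intro y hy x hx
      exact (hrange _).1
    · intro t ht
      exact abs_le.2 ⟨(hψbd t ht).1, le_trans (hψbd t ht).2 zero_le_one⟩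
    · intro x hx
      exact abs_le.2 ⟨le_trans (by norm_num) (hφbd x hx).1, (hφbd x hx).2⟩
    · exact hφconj
  · apply side hΛ1 hYconv hYball hXne (c := fun t z => h (t - z)) (G := fun t z => -(g (t - z)))
      (p := φ) (Φ := ψ)
    · intro t ht z hz
      have hmem := hZ₁ t ht z hz
      have h1 := (hgrad _ hmem).hasFDerivAt.comp z ((hasFDerivAt_id z).const_sub t)
      have h1' : HasFDerivAt (fun z => h (t - z))
          ((toDual ℝ _ (g (t - z))).comp (-ContinuousLinearMap.id ℝ _)) z := h1
      have e : (toDual ℝ _ (g (t - z))).comp (-ContinuousLinearMap.id ℝ _)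
          = toDual ℝ (EuclideanSpace ℝ (Fin d)) (-(g (t - z))) := by
        ext v
        simp [toDual_apply_apply, inner_neg_left, inner_neg_right]
      exact h1'.congr_fderiv e
    · intro t ht z hz
      rw [norm_neg]
      exact hgbd _ (hZ₁ t ht z hz)
    · intro t ht u hu v hv
      have := hgLip _ (hZ₁ t ht v hv) _ (hZ₁ t ht u hu)
      rw [sub_sub_sub_cancel_left] at this
      calc ‖-g (t - u) - -g (t - v)‖ = ‖g (t - v) - g (t - u)‖ := by rw [neg_sub_neg]
      _ ≤ Λ * ‖u - v‖ := this
    · intro t ht z hz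
      exact (hrange _).1
    · intro t ht
      exact abs_le.2 ⟨le_trans (by norm_num) (hφbd t ht).1, (hφbd t ht).2⟩
    · intro y hy
      exact abs_le.2 ⟨(hψbd y hy).1, le_trans (hψbd y hy).2 zero_le_one⟩
    · exact hψconj
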